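/- Let A be an irreducible nonnegative n×n matrix with positive Perron eigenvector x. Then ρ(A) = max over B ∈ Ω(A) of ρ(B) if and only if for all i, j, k: x_k < x_j implies a_{i,k} ≤ a_{i,j}. -/
import Mathlib

open Matrix Finset

/-- The Perron root: the largest nonnegative real eigenvalue of a matrix. -/
noncomputable def perronRoot {n : ℕ} (A : Matrix (Fin n) (Fin n) ℝ) : ℝ :=
  sSup {r : ℝ | 0 ≤ r ∧ ∃ v : Fin n → ℝ, v ≠ 0 ∧ A.mulVec v = r • v}

/-- Ω(A): matrices obtained by permuting the entries within each row of A independently. -/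
def Omega {n : ℕ} (A : Matrix (Fin n) (Fin n) ℝ) : Set (Matrix (Fin n) (Fin n) ℝ) :=
  {B | ∀ i, ∃ φ : Equiv.Perm (Fin n), ∀ j, B i j = A i (φ j)}

/-- Irreducibility: the directed graph of the matrix is strongly connected. -/
def Irred {n : ℕ} (A : Matrix (Fin n) (Fin n) ℝ) : Prop :=
  ∀ i j, ∃ m : ℕ, 0 < m ∧ 0 < (A ^ m) i j

namespace Stmt16Aux

variable {n : ℕ}

lemma mv (M : Matrix (Fin n) (Fin n) ℝ) (v : Fin n → ℝ) (i : Fin n) :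
    M.mulVec v i = ∑ j, M i j * v j := by
  simp [Matrix.mulVec, dotProduct]

/-- generic eigenvalue upper bound via a positive test vector -/
lemma eig_le {M : Matrix (Fin n) (Fin n) ℝ} (hM : ∀ i j, 0 ≤ M i j)
    {z : Fin n → ℝ} (hz : ∀ i, 0 < z i) {ρ' : ℝ}
    (hMz : ∀ i, M.mulVec z i ≤ ρ' * z i) {r : ℝ} (hr : 0 ≤ r)
    {v : Fin n → ℝ} (hv : v ≠ 0) (heq : M.mulVec v = r • v) : r ≤ ρ' := by
  obtain ⟨l, hl⟩ := Function.ne_iff.mp hv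
  have hne : (univ : Finset (Fin n)).Nonempty := ⟨l, mem_univ l⟩
  obtain ⟨i, -, hi⟩ := Finset.exists_max_image univ (fun i => |v i| / z i) hne
  set c := |v i| / z i with hc
  have hcpos : 0 < c := by
    have h1 : 0 < |v l| / z l := div_pos (abs_pos.mpr hl) (hz l)
    exact lt_of_lt_of_le h1 (hi l (mem_univ l))
  have hvc : ∀ o, |v o| ≤ c * z o := fun o => by
    have := hi o (mem_univ o)
    rw [div_le_iff₀ (hz o)] at this
    linarith [this]
  have hvi : |v i| = c * z i := (div_mul_cancel₀ _ (hz i).ne').symm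
  have h1 : r * (c * z i) ≤ ρ' * (c * z i) := by
    calc r * (c * z i) = |r * v i| := by
          rw [abs_mul, abs_of_nonneg hr, hvi]
      _ = |(M.mulVec v) i| := by rw [heq]; simp
      _ = |∑ j, M i j * v j| := by rw [mv]
      _ ≤ ∑ j, |M i j * v j| := Finset.abs_sum_le_sum_abs _ _
      _ ≤ ∑ j, M i j * (c * z j) := by
          refine Finset.sum_le_sum fun j _ => ?_
          rw [abs_mul, abs_of_nonneg (hM i j)]
          exact mul_le_mul_of_nonneg_left (hvc j) (hM i j)
      _ = c * ∑ j, M i j * z j := by rw [Finset.mul_sum]; congr 1; ext j; ring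
      _ = c * (M.mulVec z i) := by rw [mv]
      _ ≤ c * (ρ' * z i) := mul_le_mul_of_nonneg_left (hMz i) hcpos.le
      _ = ρ' * (c * z i) := by ring
  exact le_of_mul_le_mul_right h1 (mul_pos hcpos (hz i))

lemma entmul_nonneg {M N : Matrix (Fin n) (Fin n) ℝ} (hM : ∀ i j, 0 ≤ M i j)
    (hN : ∀ i j, 0 ≤ N i j) : ∀ i j, 0 ≤ (M * N) i j := fun i j => by
  rw [Matrix.mul_apply]
  exact Finset.sum_nonneg fun p _ => mul_nonneg (hM i p) (hN p j)

lemma entpow_nonneg {M : Matrix (Fin n) (Fin n) ℝ} (hM : ∀ i j, 0 ≤ M i j) :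
    ∀ t, ∀ i j, 0 ≤ (M ^ t) i j := by
  intro t
  induction t with
  | zero => intro i j; rw [pow_zero, Matrix.one_apply]; split <;> norm_num
  | succ t ih => rw [pow_succ]; exact entmul_nonneg ih hM

lemma entmul_le {M₁ M₂ N₁ N₂ : Matrix (Fin n) (Fin n) ℝ}
    (hM₂ : ∀ i j, 0 ≤ M₂ i j) (hN₁ : ∀ i j, 0 ≤ N₁ i j)
    (hM : ∀ i j, M₁ i j ≤ M₂ i j) (hN : ∀ i j, N₁ i j ≤ N₂ i j) :
    ∀ i j, (M₁ * N₁) i j ≤ (M₂ * N₂) i j := fun i j => by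
  rw [Matrix.mul_apply, Matrix.mul_apply]
  exact Finset.sum_le_sum fun p _ =>
    mul_le_mul (hM i p) (hN p j) (hN₁ p j) (hM₂ i p)

lemma entpow_le {M N : Matrix (Fin n) (Fin n) ℝ} (hM : ∀ i j, 0 ≤ M i j)
    (hMN : ∀ i j, M i j ≤ N i j) : ∀ t, ∀ i j, (M ^ t) i j ≤ (N ^ t) i j := by
  have hN : ∀ i j, 0 ≤ N i j := fun i j => le_trans (hM i j) (hMN i j)
  intro t
  induction t with
  | zero => intro i j; rw [pow_zero, pow_zero]
  | succ t ih =>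
      rw [pow_succ, pow_succ]
      exact entmul_le (entpow_nonneg hN t) hM ih hMN

lemma pow_le_one_add_pow {B : Matrix (Fin n) (Fin n) ℝ} (hB : ∀ i j, 0 ≤ B i j)
    {m N : ℕ} (hmN : m ≤ N) : ∀ i j, (B ^ m) i j ≤ ((1 + B) ^ N) i j := by
  have h1B : ∀ i j, 0 ≤ (1 + B : Matrix (Fin n) (Fin n) ℝ) i j := fun i j => by
    have : (1 + B : Matrix (Fin n) (Fin n) ℝ) i j = (1 : Matrix (Fin n) (Fin n) ℝ) i j + B i j := rfl
    rw [this, Matrix.one_apply]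
    split <;> [linarith [hB i j]; simpa using hB i j]
  have hle1 : ∀ i j, B i j ≤ (1 + B : Matrix (Fin n) (Fin n) ℝ) i j := fun i j => by
    have : (1 + B : Matrix (Fin n) (Fin n) ℝ) i j = (1 : Matrix (Fin n) (Fin n) ℝ) i j + B i j := rfl
    rw [this, Matrix.one_apply]
    split <;> norm_num
  intro i j
  have step1 : (B ^ m) i j ≤ ((1 + B) ^ m) i j := entpow_le hB hle1 m i j
  have step2 : ((1 + B) ^ m) i j ≤ ((1 + B) ^ N) i j := by
    have hsplit : ((1 + B) ^ N : Matrix (Fin n) (Fin n) ℝ) = (1 + B) ^ m * (1 + B) ^ (N - m) := by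
      rw [← pow_add]; congr 1; omega
    have hone : ∀ i j, (1 : Matrix (Fin n) (Fin n) ℝ) i j ≤ ((1 + B) ^ (N - m)) i j := fun i j => by
      have := entpow_le (M := (1 : Matrix (Fin n) (Fin n) ℝ)) (N := 1 + B)
        (fun i j => by rw [Matrix.one_apply]; split <;> norm_num)
        (fun i j => by
          have h2 : (1 + B : Matrix (Fin n) (Fin n) ℝ) i j = (1 : Matrix (Fin n) (Fin n) ℝ) i j + B i j := rfl
          rw [h2]; linarith [hB i j]) (N - m) i j
      rwa [one_pow] at this
    have := entmul_le (M₁ := (1+B)^m) (M₂ := (1+B)^m) (N₁ := 1) (N₂ := (1+B)^(N-m))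
      (entpow_nonneg h1B m) (fun i j => by rw [Matrix.one_apply]; split <;> norm_num)
      (fun i j => le_refl _) hone i j
    rwa [mul_one, ← hsplit] at this
  linarith

/-- reachability transfer from A to B (B agrees with A off row i₀) -/
lemma reach {A B : Matrix (Fin n) (Fin n) ℝ} (i₀ : Fin n)
    (hrow : ∀ l, l ≠ i₀ → ∀ p, B l p = A l p)
    (hA : ∀ i j, 0 ≤ A i j) (hB : ∀ i j, 0 ≤ B i j) :
    ∀ m, ∀ l, 0 < (A ^ m) l i₀ → ∃ m', 0 < (B ^ m') l i₀ := by
  intro m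
  induction m with
  | zero =>
      intro l h
      rw [pow_zero, Matrix.one_apply] at h
      split at h
      · next heq => exact ⟨0, by rw [pow_zero, Matrix.one_apply, if_pos heq]; norm_num⟩
      · norm_num at h
  | succ m ih =>
      intro l h
      by_cases hl : l = i₀
      · exact ⟨0, by rw [pow_zero, Matrix.one_apply, if_pos hl]; norm_num⟩
      · rw [pow_succ', Matrix.mul_apply] at h
        have : ∃ p, 0 < A l p * (A ^ m) p i₀ := by
          by_contra hc
          push_neg at hc
          have : ∑ p, A l p * (A ^ m) p i₀ ≤ 0 := Finset.sum_nonpos fun p _ => hc p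
          linarith
        obtain ⟨p, hp⟩ := this
        have hAlp : 0 < A l p := by
          rcases lt_or_eq_of_le (hA l p) with h' | h'
          · exact h'
          · rw [← h'] at hp; simp at hp
        have hAm : 0 < (A ^ m) p i₀ := by
          rcases lt_or_eq_of_le (entpow_nonneg hA m p i₀) with h' | h'
          · exact h'
          · rw [← h'] at hp; simp at hp
        obtain ⟨m', hm'⟩ := ih p hAm
        refine ⟨m' + 1, ?_⟩
        rw [pow_succ', Matrix.mul_apply]
        have hterm : 0 < B l p * (B ^ m') p i₀ := by
          rw [hrow l hl p]
          exact mul_pos hAlp hm'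
        have : B l p * (B ^ m') p i₀ ≤ ∑ q, B l q * (B ^ m') q i₀ :=
          Finset.single_le_sum (f := fun q => B l q * (B ^ m') q i₀)
            (fun q _ => mul_nonneg (hB l q) (entpow_nonneg hB m' q i₀)) (mem_univ p)
        linarith

/-- the standard simplex -/
def K (n : ℕ) : Set (Fin n → ℝ) := {v | (∀ i, 0 ≤ v i) ∧ ∑ i, v i = 1}

lemma K_compact : IsCompact (K n) := by
  have hsub : K n ⊆ Set.Icc (0 : Fin n → ℝ) (fun _ => 1) := by
    rintro v ⟨hv0, hv1⟩
    constructor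
    · intro i; exact hv0 i
    · intro i
      have : v i ≤ ∑ j, v j :=
        Finset.single_le_sum (fun j _ => hv0 j) (mem_univ i)
      rw [hv1] at this; exact this
  have hcl : IsClosed (K n) := by
    have : K n = (⋂ i, (fun v : Fin n → ℝ => v i) ⁻¹' Set.Ici 0) ∩
        ((fun v : Fin n → ℝ => ∑ i, v i) ⁻¹' {1}) := by
      ext v
      simp [K, Set.mem_iInter]
    rw [this]
    exact IsClosed.inter
      (isClosed_iInter fun i => isClosed_Ici.preimage (continuous_apply i))
      (isClosed_singleton.preimage (continuous_finset_sum _ fun i _ => continuous_apply i))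
  exact IsCompact.of_isClosed_subset isCompact_Icc hcl hsub

lemma cont_mv (C : Matrix (Fin n) (Fin n) ℝ) (i : Fin n) :
    Continuous fun v : Fin n → ℝ => C.mulVec v i := by
  have : (fun v : Fin n → ℝ => C.mulVec v i) = fun v => ∑ j, C i j * v j := by
    funext v; rw [mv]
  rw [this]
  exact continuous_finset_sum _ fun j _ => continuous_const.mul (continuous_apply j)

lemma norm_mem_K (hn : 0 < n) {y : Fin n → ℝ} (hy0 : ∀ i, 0 ≤ y i)
    (hys : 0 < ∑ i, y i) : (∑ i, y i)⁻¹ • y ∈ K n := by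
  constructor
  · intro i
    exact mul_nonneg (inv_nonneg.mpr hys.le) (hy0 i)
  · simp only [Pi.smul_apply, smul_eq_mul]
    rw [← Finset.mul_sum]
    exact inv_mul_cancel₀ hys.ne'

lemma perron_pos (hn : 0 < n) {C : Matrix (Fin n) (Fin n) ℝ} (hC : ∀ i j, 0 < C i j)
    {s : ℝ} (hs : 0 ≤ s) {y : Fin n → ℝ} (hy : ∀ i, 0 < y i)
    (hCy : ∀ i, s * y i ≤ C.mulVec y i) :
    ∃ r v, s ≤ r ∧ v ∈ K n ∧ C.mulVec v = r • v := by
  have hne : (univ : Finset (Fin n)).Nonempty := ⟨⟨0, hn⟩, mem_univ _⟩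
  set S : Set ℝ := {r : ℝ | 0 ≤ r ∧ ∃ v ∈ K n, ∀ i, r * v i ≤ C.mulVec v i} with hS
  -- s ∈ S
  have hys : 0 < ∑ i, y i := Finset.sum_pos (fun i _ => hy i) hne
  have hsS : s ∈ S := by
    refine ⟨hs, (∑ i, y i)⁻¹ • y, norm_mem_K hn (fun i => (hy i).le) hys, fun i => ?_⟩
    rw [Matrix.mulVec_smul]
    have : s * ((∑ i, y i)⁻¹ • y) i = (∑ i, y i)⁻¹ * (s * y i) := by
      simp [smul_eq_mul]; ring
    rw [this]
    simp only [Pi.smul_apply, smul_eq_mul]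
    exact mul_le_mul_of_nonneg_left (hCy i) (inv_nonneg.mpr hys.le)
  -- bounded above
  have hbdd : BddAbove S := by
    refine ⟨univ.sup' hne (fun i => ∑ j, C i j), ?_⟩
    rintro r ⟨hr0, v, ⟨hv0, hv1⟩, hrv⟩
    obtain ⟨i, -, hi⟩ := Finset.exists_max_image univ v hne
    have hvi : 0 < v i := by
      by_contra hc
      push_neg at hc
      have : ∑ j, v j ≤ 0 := Finset.sum_nonpos fun j _ => le_trans (hi j (mem_univ j)) hc
      rw [hv1] at this; linarith
    have h1 : r * v i ≤ (∑ j, C i j) * v i := by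
      calc r * v i ≤ C.mulVec v i := hrv i
        _ = ∑ j, C i j * v j := mv _ _ _
        _ ≤ ∑ j, C i j * v i := Finset.sum_le_sum fun j _ =>
            mul_le_mul_of_nonneg_left (hi j (mem_univ j)) (hC i j).le
        _ = (∑ j, C i j) * v i := by rw [Finset.sum_mul]
    exact le_trans (le_of_mul_le_mul_right h1 hvi) (Finset.le_sup' (fun i => ∑ j, C i j) (mem_univ i))
  set rstar := sSup S with hrstar
  have hsr : s ≤ rstar := le_csSup hbdd hsS
  have hr0 : 0 ≤ rstar := le_trans hs hsr
  -- approximating sequence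
  have happrox : ∀ m : ℕ, ∃ v ∈ K n, ∀ i, (rstar - 1 / (m + 1)) * v i ≤ C.mulVec v i := by
    intro m
    have hlt : rstar - 1 / (m + 1 : ℝ) < rstar := by
      have : (0:ℝ) < 1 / (m + 1 : ℝ) := by positivity
      linarith
    obtain ⟨r', ⟨-, v, hvK, hv⟩, hr'⟩ := exists_lt_of_lt_csSup ⟨s, hsS⟩ hlt
    exact ⟨v, hvK, fun i =>
      le_trans (mul_le_mul_of_nonneg_right hr'.le (hvK.1 i)) (hv i)⟩
  choose vs hvsK hvs using happrox
  obtain ⟨vstar, hvstarK, φ, hφ, hconv⟩ := K_compact.tendsto_subseq hvsK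
  have hεconv : Filter.Tendsto (fun m : ℕ => (1 : ℝ) / (φ m + 1)) Filter.atTop (nhds 0) :=
    tendsto_one_div_add_atTop_nhds_zero_nat.comp hφ.tendsto_atTop
  have hstarineq : ∀ i, rstar * vstar i ≤ C.mulVec vstar i := by
    intro i
    have hL : Filter.Tendsto (fun m => C.mulVec (vs (φ m)) i) Filter.atTop
        (nhds (C.mulVec vstar i)) := ((cont_mv C i).tendsto _).comp hconv
    have hvi : Filter.Tendsto (fun m => vs (φ m) i) Filter.atTop (nhds (vstar i)) :=
      ((continuous_apply i).tendsto _).comp hconv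
    have hR : Filter.Tendsto (fun m => (rstar - 1 / (φ m + 1)) * vs (φ m) i)
        Filter.atTop (nhds (rstar * vstar i)) := by
      have : Filter.Tendsto (fun m : ℕ => rstar - 1 / (φ m + 1 : ℝ)) Filter.atTop
          (nhds rstar) := by
        have := (tendsto_const_nhds (x := rstar) (f := Filter.atTop (α := ℕ))).sub hεconv
        simpa using this
      simpa using this.mul hvi
    exact le_of_tendsto_of_tendsto' hR hL fun m => hvs (φ m) i
  by_cases heq : C.mulVec vstar = rstar • vstar
  · exact ⟨rstar, vstar, hsr, hvstarK, heq⟩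
  · exfalso
    obtain ⟨i₁, hi₁⟩ : ∃ i, rstar * vstar i < C.mulVec vstar i := by
      by_contra hc
      push_neg at hc
      apply heq
      funext i
      have := le_antisymm (hc i) (hstarineq i)
      simp [Pi.smul_apply, smul_eq_mul, ← this]
    -- minimum entry of C
    set c := univ.inf' hne (fun i => univ.inf' hne (C i)) with hc
    have hcpos : 0 < c := by
      rw [hc, Finset.lt_inf'_iff]
      intro i _
      rw [Finset.lt_inf'_iff]
      intro j _
      exact hC i j
    have hcle : ∀ i j, c ≤ C i j := fun i j =>
      le_trans (Finset.inf'_le _ (mem_univ i)) (Finset.inf'_le _ (mem_univ j))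
    set w := C.mulVec vstar with hw
    have hwc : ∀ l, c ≤ w l := by
      intro l
      have : ∑ j, c * vstar j ≤ ∑ j, C l j * vstar j := Finset.sum_le_sum fun j _ =>
        mul_le_mul_of_nonneg_right (hcle l j) (hvstarK.1 j)
      rw [← Finset.mul_sum, hvstarK.2, mul_one] at this
      rw [hw, mv]; exact this
    have hwpos : ∀ l, 0 < w l := fun l => lt_of_lt_of_le hcpos (hwc l)
    set u := fun l => w l - rstar * vstar l with hu
    have hu0 : ∀ l, 0 ≤ u l := fun l => by
      simp only [hu]; linarith [hstarineq l]
    have hui₁ : 0 < u i₁ := by simp only [hu]; linarith [hi₁]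
    have hCu : ∀ l, c * u i₁ ≤ C.mulVec u l := by
      intro l
      rw [mv]
      have h1 : C l i₁ * u i₁ ≤ ∑ j, C l j * u j :=
        Finset.single_le_sum (f := fun j => C l j * u j)
          (fun j _ => mul_nonneg (hC l j).le (hu0 j)) (mem_univ i₁)
      have h2 : c * u i₁ ≤ C l i₁ * u i₁ :=
        mul_le_mul_of_nonneg_right (hcle l i₁) (hu0 i₁)
      linarith
    have hCw : ∀ l, C.mulVec w l = rstar * w l + C.mulVec u l := by
      have hvw : vstar = rstar • vstar + u → True := fun _ => trivial
      have hdecomp : w = rstar • vstar + u := by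
        funext l; simp [hu, Pi.smul_apply, smul_eq_mul]
      intro l
      conv_lhs => rw [hdecomp]
      rw [Matrix.mulVec_add, Matrix.mulVec_smul]
      simp [Pi.smul_apply, smul_eq_mul, hw]
    set Mx := univ.sup' hne w with hMx
    have hMxpos : 0 < Mx := lt_of_lt_of_le (hwpos ⟨0, hn⟩) (Finset.le_sup' _ (mem_univ _))
    set η := c * u i₁ / Mx with hη
    have hηpos : 0 < η := div_pos (mul_pos hcpos hui₁) hMxpos
    have hstep : ∀ l, (rstar + η) * w l ≤ C.mulVec w l := by
      intro l
      have h1 : η * w l ≤ c * u i₁ := by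
        rw [hη, div_mul_eq_mul_div, div_le_iff₀ hMxpos]
        exact mul_le_mul_of_nonneg_left (Finset.le_sup' _ (mem_univ l)) (mul_pos hcpos hui₁).le
      have := hCu l
      rw [hCw l]; nlinarith [hCu l]
    -- normalize w and contradict maximality
    have hws : 0 < ∑ l, w l := Finset.sum_pos (fun l _ => hwpos l) hne
    have hmem : rstar + η ∈ S := by
      refine ⟨by linarith, (∑ l, w l)⁻¹ • w,
        norm_mem_K hn (fun l => (hwpos l).le) hws, fun l => ?_⟩
      rw [Matrix.mulVec_smul]
      simp only [Pi.smul_apply, smul_eq_mul]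
      have := mul_le_mul_of_nonneg_left (hstep l) (inv_nonneg.mpr hws.le)
      nlinarith [this]
    have := le_csSup hbdd hmem
    linarith

lemma perron_nonneg (hn : 0 < n) {C : Matrix (Fin n) (Fin n) ℝ} (hC : ∀ i j, 0 ≤ C i j)
    {s : ℝ} (hs : 0 ≤ s) {y : Fin n → ℝ} (hy : ∀ i, 0 < y i)
    (hCy : ∀ i, s * y i ≤ C.mulVec y i) :
    ∃ r v, s ≤ r ∧ v ≠ 0 ∧ C.mulVec v = r • v := by
  have hne : (univ : Finset (Fin n)).Nonempty := ⟨⟨0, hn⟩, mem_univ _⟩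
  set ε : ℕ → ℝ := fun m => 1 / (m + 1) with hε
  have hεpos : ∀ m, 0 < ε m := fun m => by positivity
  have hεle1 : ∀ m, ε m ≤ 1 := fun m => by
    rw [hε]
    rw [div_le_one (by positivity)]
    have : (0:ℝ) ≤ (m:ℝ) := Nat.cast_nonneg m
    linarith
  set Cm : ℕ → Matrix (Fin n) (Fin n) ℝ :=
    fun m => Matrix.of fun i j => C i j + ε m with hCm
  have hCmpos : ∀ m i j, 0 < Cm m i j := fun m i j =>
    add_pos_of_nonneg_of_pos (hC i j) (hεpos m)
  have hCmy : ∀ m i, s * y i ≤ (Cm m).mulVec y i := by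
    intro m i
    rw [mv]
    have h1 : ∑ j, Cm m i j * y j = (∑ j, C i j * y j) + ε m * ∑ j, y j := by
      rw [Finset.mul_sum, ← Finset.sum_add_distrib]
      congr 1; funext j; simp [hCm]; ring
    rw [h1]
    have h2 : 0 ≤ ε m * ∑ j, y j :=
      mul_nonneg (hεpos m).le (Finset.sum_nonneg fun j _ => (hy j).le)
    have := hCy i
    rw [mv] at this
    linarith
  have key : ∀ m : ℕ, ∃ rv : ℝ × (Fin n → ℝ), s ≤ rv.1 ∧ rv.2 ∈ K n ∧
      (Cm m).mulVec rv.2 = rv.1 • rv.2 := by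
    intro m
    obtain ⟨r, v, h1, h2, h3⟩ := perron_pos hn (hCmpos m) hs hy (hCmy m)
    exact ⟨(r, v), h1, h2, h3⟩
  choose p hps hpK hpeq using key
  -- bound on the eigenvalues
  set R' := univ.sup' hne (fun i => ∑ j, C i j) + n with hR'
  have hpb : ∀ m, (p m).1 ≤ R' := by
    intro m
    obtain ⟨hv0, hv1⟩ := hpK m
    obtain ⟨i, -, hi⟩ := Finset.exists_max_image univ (p m).2 hne
    have hvi : 0 < (p m).2 i := by
      by_contra hc
      push_neg at hc
      have : ∑ j, (p m).2 j ≤ 0 := Finset.sum_nonpos fun j _ =>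
        le_trans (hi j (mem_univ j)) hc
      rw [hv1] at this; linarith
    have h1 : (p m).1 * (p m).2 i ≤ R' * (p m).2 i := by
      have he : (Cm m).mulVec (p m).2 i = (p m).1 * (p m).2 i := by
        rw [hpeq m]; simp
      calc (p m).1 * (p m).2 i = (Cm m).mulVec (p m).2 i := he.symm
        _ = ∑ j, Cm m i j * (p m).2 j := mv _ _ _
        _ ≤ ∑ j, Cm m i j * (p m).2 i := Finset.sum_le_sum fun j _ =>
            mul_le_mul_of_nonneg_left (hi j (mem_univ j)) (hCmpos m i j).le
        _ = (∑ j, Cm m i j) * (p m).2 i := by rw [Finset.sum_mul]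
        _ ≤ R' * (p m).2 i := by
            refine mul_le_mul_of_nonneg_right ?_ hvi.le
            have h3 : ∑ j, Cm m i j = (∑ j, C i j) + (n : ℝ) * ε m := by
              simp only [hCm, Matrix.of_apply, Finset.sum_add_distrib,
                Finset.sum_const, Finset.card_univ, Fintype.card_fin, nsmul_eq_mul]
            rw [h3, hR']
            have h4 : ∑ j, C i j ≤ univ.sup' hne (fun i => ∑ j, C i j) :=
              Finset.le_sup' (fun i => ∑ j, C i j) (mem_univ i)
            have h5 : (n:ℝ) * ε m ≤ n := by
              have := hεle1 m
              have hn0 : (0:ℝ) ≤ n := Nat.cast_nonneg n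
              nlinarith [hεpos m]
            linarith
    exact le_of_mul_le_mul_right h1 hvi
  -- compactness of Icc s R' ×ˢ K n
  have hco : IsCompact (Set.Icc s R' ×ˢ K n) := isCompact_Icc.prod K_compact
  have hpmem : ∀ m, p m ∈ Set.Icc s R' ×ˢ K n := fun m =>
    ⟨⟨hps m, hpb m⟩, hpK m⟩
  obtain ⟨⟨r, v⟩, hrv, φ, hφ, hconv⟩ := hco.tendsto_subseq hpmem
  have hrconv : Filter.Tendsto (fun m => (p (φ m)).1) Filter.atTop (nhds r) :=
    (continuous_fst.tendsto _).comp hconv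
  have hvconv : Filter.Tendsto (fun m => (p (φ m)).2) Filter.atTop (nhds v) :=
    (continuous_snd.tendsto _).comp hconv
  have hεconv : Filter.Tendsto (fun m : ℕ => ε (φ m)) Filter.atTop (nhds 0) :=
    tendsto_one_div_add_atTop_nhds_zero_nat.comp hφ.tendsto_atTop
  have heig : ∀ i, C.mulVec v i = r * v i := by
    intro i
    have hLm : ∀ m, (Cm (φ m)).mulVec (p (φ m)).2 i
        = C.mulVec (p (φ m)).2 i + ε (φ m) := by
      intro m
      rw [mv, mv]
      have : ∑ j, Cm (φ m) i j * (p (φ m)).2 j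
          = (∑ j, C i j * (p (φ m)).2 j) + ε (φ m) * ∑ j, (p (φ m)).2 j := by
        rw [Finset.mul_sum, ← Finset.sum_add_distrib]
        congr 1; funext j; simp [hCm]; ring
      rw [this, (hpK (φ m)).2, mul_one]
    have hL : Filter.Tendsto (fun m => (Cm (φ m)).mulVec (p (φ m)).2 i)
        Filter.atTop (nhds (C.mulVec v i)) := by
      have h1 : Filter.Tendsto (fun m => C.mulVec (p (φ m)).2 i + ε (φ m))
          Filter.atTop (nhds (C.mulVec v i + 0)) :=
        (((cont_mv C i).tendsto _).comp hvconv).add hεconv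
      rw [add_zero] at h1
      simpa [hLm] using h1
    have hR : Filter.Tendsto (fun m => (Cm (φ m)).mulVec (p (φ m)).2 i)
        Filter.atTop (nhds (r * v i)) := by
      have h2 : ∀ m, (Cm (φ m)).mulVec (p (φ m)).2 i = (p (φ m)).1 * (p (φ m)).2 i := by
        intro m; rw [hpeq (φ m)]; simp
      have h3 : Filter.Tendsto (fun m => (p (φ m)).1 * (p (φ m)).2 i)
          Filter.atTop (nhds (r * v i)) :=
        hrconv.mul (((continuous_apply i).tendsto _).comp hvconv)
      simpa [h2] using h3
    exact tendsto_nhds_unique hL hR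
  refine ⟨r, v, hrv.1.1, ?_, funext fun i => by
    rw [heig i]; simp⟩
  intro hv0
  have := hrv.2.2
  rw [hv0] at this
  simp at this

lemma exists_big (hn : 0 < n) {A : Matrix (Fin n) (Fin n) ℝ} (hA : ∀ i j, 0 ≤ A i j)
    (hirr : Irred A) {x : Fin n → ℝ} (hxpos : ∀ i, 0 < x i) {ρ : ℝ} (hρ0 : 0 ≤ ρ)
    (heig : A.mulVec x = ρ • x) {i₀ j k : Fin n} (hxjk : x k < x j)
    (hAjk : A i₀ j < A i₀ k) :
    ∃ B ∈ Omega A, ∃ r v, ρ < r ∧ v ≠ 0 ∧ B.mulVec v = r • v := by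
  have hne : (univ : Finset (Fin n)).Nonempty := ⟨⟨0, hn⟩, mem_univ _⟩
  have hjk : j ≠ k := by rintro rfl; exact lt_irrefl _ hxjk
  set σ := Equiv.swap j k with hσ
  set B : Matrix (Fin n) (Fin n) ℝ :=
    Matrix.of fun l m => if l = i₀ then A l (σ m) else A l m with hB
  have hBΩ : B ∈ Omega A := by
    intro l
    by_cases hl : l = i₀
    · exact ⟨σ, fun m => by simp [hB, hl]⟩
    · exact ⟨1, fun m => by simp [hB, hl]⟩
  have hB0 : ∀ l m, 0 ≤ B l m := fun l m => by
    simp only [hB, Matrix.of_apply]; split <;> apply hA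
  have hrow : ∀ l, l ≠ i₀ → ∀ m, B l m = A l m := fun l hl m => by
    simp [hB, hl]
  set δ := (A i₀ k - A i₀ j) * (x j - x k) with hδ
  have hδpos : 0 < δ := mul_pos (by linarith) (by linarith)
  have hAx : ∀ l, A.mulVec x l = ρ * x l := fun l => by rw [heig]; simp
  have hBx : ∀ l, l ≠ i₀ → B.mulVec x l = ρ * x l := by
    intro l hl
    rw [mv, ← hAx l, mv]
    exact Finset.sum_congr rfl fun m _ => by rw [hrow l hl m]
  have hBxi : B.mulVec x i₀ = ρ * x i₀ + δ := by
    rw [mv]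
    have hBi : ∀ m, B i₀ m = A i₀ (σ m) := fun m => by simp [hB]
    have hsum : ∑ m, B i₀ m * x m = (∑ m, A i₀ m * x m) + δ := by
      have hsplit : ∑ m, (A i₀ (σ m) * x m - A i₀ m * x m) = δ := by
        rw [← Finset.sum_subset (Finset.subset_univ ({j, k} : Finset (Fin n)))
          (fun m _ hm => ?_)]
        · rw [Finset.sum_pair hjk]
          have hsj : σ j = k := Equiv.swap_apply_left j k
          have hsk : σ k = j := Equiv.swap_apply_right j k
          rw [hsj, hsk, hδ]; ring
        · have hmj : m ≠ j := fun h => hm (by simp [h])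
          have hmk : m ≠ k := fun h => hm (by simp [h])
          rw [Equiv.swap_apply_of_ne_of_ne hmj hmk]
          ring
      calc ∑ m, B i₀ m * x m = ∑ m, A i₀ (σ m) * x m :=
            Finset.sum_congr rfl fun m _ => by rw [hBi m]
        _ = (∑ m, A i₀ m * x m) + ∑ m, (A i₀ (σ m) * x m - A i₀ m * x m) := by
            rw [← Finset.sum_add_distrib]; congr 1; funext m; ring
        _ = (∑ m, A i₀ m * x m) + δ := by rw [hsplit]
    rw [hsum, ← mv, hAx i₀]
  -- reachability in B
  have hreach : ∀ l, ∃ m', 0 < (B ^ m') l i₀ := by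
    intro l
    by_cases hl : l = i₀
    · exact ⟨0, by rw [pow_zero, Matrix.one_apply, if_pos hl]; norm_num⟩
    · obtain ⟨m, -, hm⟩ := hirr l i₀
      exact reach i₀ hrow hA hB0 m l hm
  choose f hf using hreach
  set N := univ.sup f with hN
  have hfN : ∀ l, f l ≤ N := fun l => Finset.le_sup (mem_univ l)
  set P := ((1 + B) ^ N : Matrix (Fin n) (Fin n) ℝ) with hP
  have h1B0 : ∀ a b, 0 ≤ (1 + B : Matrix (Fin n) (Fin n) ℝ) a b := fun a b => by
    have h2 : (1 + B : Matrix (Fin n) (Fin n) ℝ) a b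
        = (1 : Matrix (Fin n) (Fin n) ℝ) a b + B a b := rfl
    rw [h2, Matrix.one_apply]
    split <;> [linarith [hB0 a b]; simpa using hB0 a b]
  have hP0 : ∀ i' j', 0 ≤ P i' j' := fun i' j' => entpow_nonneg h1B0 N i' j'
  have hPl : ∀ l, 0 < P l i₀ := fun l =>
    lt_of_lt_of_le (hf l) (pow_le_one_add_pow hB0 (hfN l) l i₀)
  have hP1 : ∀ i' j', (1 : Matrix (Fin n) (Fin n) ℝ) i' j' ≤ P i' j' := fun i' j' => by
    have := pow_le_one_add_pow hB0 (Nat.zero_le N) (i := i') (j := j')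
    rwa [pow_zero] at this
  set y := P.mulVec x with hy
  have hypos : ∀ l, 0 < y l := by
    intro l
    have h1 : ∑ m, (1 : Matrix (Fin n) (Fin n) ℝ) l m * x m ≤ ∑ m, P l m * x m :=
      Finset.sum_le_sum fun m _ => mul_le_mul_of_nonneg_right (hP1 l m) (hxpos m).le
    have h2 : ∑ m, (1 : Matrix (Fin n) (Fin n) ℝ) l m * x m = x l := by
      rw [← mv, Matrix.one_mulVec]
    rw [hy, mv]
    rw [h2] at h1
    exact lt_of_lt_of_le (hxpos l) h1
  have hcomm : B * P = P * B := by
    have h1 : Commute B (1 + B) := (Commute.one_right B).add_right (Commute.refl B)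
    exact (h1.pow_right N)
  set u := fun l => B.mulVec x l - ρ * x l with hu
  have hu0 : ∀ l, 0 ≤ u l := by
    intro l
    show 0 ≤ B.mulVec x l - ρ * x l
    by_cases hl : l = i₀
    · subst hl; rw [hBxi]; linarith
    · rw [hBx l hl]; linarith
  have hui : 0 < u i₀ := by
    show 0 < B.mulVec x i₀ - ρ * x i₀
    rw [hBxi]; linarith
  set w := P.mulVec u with hw
  have hwpos : ∀ l, 0 < w l := by
    intro l
    rw [hw, mv]
    have h1 : P l i₀ * u i₀ ≤ ∑ m, P l m * u m :=
      Finset.single_le_sum (f := fun m => P l m * u m)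
        (fun m _ => mul_nonneg (hP0 l m) (hu0 m)) (mem_univ i₀)
    exact lt_of_lt_of_le (mul_pos (hPl l) hui) h1
  have hBy : ∀ l, B.mulVec y l = ρ * y l + w l := by
    have hBxu : B.mulVec x = ρ • x + u := by
      funext l; simp [hu, Pi.smul_apply, smul_eq_mul]
    have h1 : B.mulVec y = P.mulVec (B.mulVec x) := by
      rw [hy, Matrix.mulVec_mulVec, Matrix.mulVec_mulVec, hcomm]
    intro l
    rw [h1, hBxu, Matrix.mulVec_add, Matrix.mulVec_smul]
    simp [hy, hw, Pi.smul_apply, smul_eq_mul]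
  set η := univ.inf' hne (fun l => w l / y l) with hη
  have hηpos : 0 < η := by
    rw [hη, Finset.lt_inf'_iff]
    intro l _
    exact div_pos (hwpos l) (hypos l)
  have hsy : ∀ l, (ρ + η) * y l ≤ B.mulVec y l := by
    intro l
    have h1 : η ≤ w l / y l := Finset.inf'_le _ (mem_univ l)
    have h2 : η * y l ≤ w l := by
      rw [← div_mul_cancel₀ (w l) (hypos l).ne']
      exact mul_le_mul_of_nonneg_right h1 (hypos l).le
    rw [hBy l]; nlinarith [h2]
  obtain ⟨r, v, hsr, hv, heqv⟩ := perron_nonneg hn hB0 (by linarith : (0:ℝ) ≤ ρ + η)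
    hypos hsy
  exact ⟨B, hBΩ, r, v, by linarith, hv, heqv⟩

end Stmt16Aux

theorem stmt16 {n : ℕ} (A : Matrix (Fin n) (Fin n) ℝ) (hA : ∀ i j, 0 ≤ A i j)
    (hirr : Irred A) (x : Fin n → ℝ) (hxpos : ∀ i, 0 < x i)
    (heig : A.mulVec x = perronRoot A • x) :
    perronRoot A = sSup (perronRoot '' Omega A) ↔
      (∀ i j k, x k < x j → A i k ≤ A i j) := by
  classical
  rcases Nat.eq_zero_or_pos n with hn0 | hn
  · subst hn0
    constructor
    · intro _ i; exact i.elim0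
    · intro _
      have hAΩ : A ∈ Omega A := fun i => ⟨1, fun j => rfl⟩
      have himg : perronRoot '' Omega A = {perronRoot A} := by
        apply Set.eq_singleton_iff_unique_mem.mpr
        constructor
        · exact ⟨A, hAΩ, rfl⟩
        · rintro r ⟨B, -, rfl⟩
          have : B = A := by funext i j; exact i.elim0
          rw [this]
      rw [himg, csSup_singleton]
  · set ρ := perronRoot A with hρ
    have hne : (univ : Finset (Fin n)).Nonempty := ⟨⟨0, hn⟩, mem_univ _⟩
    have hAx : ∀ i, A.mulVec x i = ρ * x i := fun i => by rw [heig]; simp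
    have hρ0 : 0 ≤ ρ := by
      have h1 : 0 ≤ A.mulVec x ⟨0, hn⟩ := by
        rw [Stmt16Aux.mv]
        exact Finset.sum_nonneg fun j _ => mul_nonneg (hA _ j) (hxpos j).le
      rw [hAx ⟨0, hn⟩] at h1
      by_contra h; push_neg at h
      nlinarith [hxpos (⟨0, hn⟩ : Fin n)]
    have hAΩ : A ∈ Omega A := fun i => ⟨1, fun j => rfl⟩
    set R := univ.sup' hne (fun i => ∑ j, A i j) with hR
    have hR0 : 0 ≤ R := le_trans (Finset.sum_nonneg fun j _ => hA ⟨0, hn⟩ j)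
      (Finset.le_sup' (fun i => ∑ j, A i j) (mem_univ ⟨0, hn⟩))
    have hBnn : ∀ B ∈ Omega A, ∀ i j, 0 ≤ B i j := by
      intro B hB i j
      obtain ⟨φ, hφ⟩ := hB i
      rw [hφ j]; exact hA i (φ j)
    have hBrow : ∀ B ∈ Omega A, ∀ i, B.mulVec (fun _ => (1:ℝ)) i ≤ R * 1 := by
      intro B hB i
      obtain ⟨φ, hφ⟩ := hB i
      rw [Stmt16Aux.mv]
      have h1 : ∑ j, B i j * 1 = ∑ j, A i (φ j) := by simp [hφ]
      rw [h1, Equiv.sum_comp φ (fun j => A i j), mul_one]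
      exact Finset.le_sup' (fun i => ∑ j, A i j) (mem_univ i)
    have hub : ∀ B ∈ Omega A, perronRoot B ≤ R := by
      intro B hB
      apply Real.sSup_le _ hR0
      rintro r ⟨hr0, v, hv, heq'⟩
      exact Stmt16Aux.eig_le (hBnn B hB) (fun _ => one_pos)
        (fun i => hBrow B hB i) hr0 hv heq'
    have hbdd : BddAbove (perronRoot '' Omega A) := by
      refine ⟨R, ?_⟩
      rintro r ⟨B, hB, rfl⟩
      exact hub B hB
    constructor
    · intro hEq
      by_contra hcond
      push_neg at hcond
      obtain ⟨i₀, j, k, hxjk, hAjk⟩ := hcond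
      obtain ⟨B, hBΩ, r, v, hρr, hv, heqv⟩ :=
        Stmt16Aux.exists_big hn hA hirr hxpos hρ0 heig hxjk hAjk
      have h1 : r ≤ perronRoot B := by
        apply le_csSup
        · refine ⟨R, ?_⟩
          rintro r' ⟨hr0', v', hv', heq''⟩
          exact Stmt16Aux.eig_le (hBnn B hBΩ) (fun _ => one_pos)
            (fun i => hBrow B hBΩ i) hr0' hv' heq''
        · exact ⟨le_trans hρ0 hρr.le, v, hv, heqv⟩
      have h2 : perronRoot B ≤ sSup (perronRoot '' Omega A) :=
        le_csSup hbdd ⟨B, hBΩ, rfl⟩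
      rw [← hEq] at h2
      linarith
    · intro hcond
      have hple : ∀ B ∈ Omega A, perronRoot B ≤ ρ := by
        intro B hB
        apply Real.sSup_le _ hρ0
        rintro r ⟨hr0, v, hv, heq'⟩
        refine Stmt16Aux.eig_le (hBnn B hB) hxpos (fun i => ?_) hr0 hv heq'
        obtain ⟨φ, hφ⟩ := hB i
        rw [Stmt16Aux.mv]
        have h1 : ∑ j, B i j * x j = ∑ j, A i (φ j) * x j :=
          Finset.sum_congr rfl fun j _ => by rw [hφ j]
        rw [h1]
        have hmono : Monovary (A i) x := fun a b h => hcond i b a h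
        have h2 := hmono.sum_comp_perm_mul_le_sum_mul (σ := φ)
        rw [← hAx i, Stmt16Aux.mv]
        exact h2
      apply le_antisymm
      · exact le_csSup hbdd ⟨A, hAΩ, rfl⟩
      · apply Real.sSup_le _ hρ0
        rintro r ⟨B, hB, rfl⟩
        exact hple B hB
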